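/- arXiv:2001.00534 — 3 statements merged into one kernel-verified Lean document; each statement's English description precedes it below -/
import Mathlib

section
/- If the circle S¹ is the union of two open, path-connected proper subsets U and V, then the intersection U ∩ V is not path connected (it has at least two path components). -/
/-- If the circle `S¹` is the union of two open, path-connected proper subsets
`U` and `V`, then the intersection `U ∩ V` is not path connected. -/
theorem circle_cover_inter_not_pathConnected (U V : Set Circle)
    (hUo : IsOpen U) (hVo : IsOpen V)
    (hUpc : IsPathConnected U) (hVpc : IsPathConnected V)
    (hUne : U ≠ Set.univ) (hVne : V ≠ Set.univ)
    (hUV : U ∪ V = Set.univ) :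
    ¬ IsPathConnected (U ∩ V) := by
  intro hWpc
  obtain ⟨a, ha⟩ : ∃ a, a ∉ U := by
    by_contra h; push_neg at h; exact hUne (Set.eq_univ_iff_forall.mpr h)
  obtain ⟨b, hb⟩ : ∃ b, b ∉ V := by
    by_contra h; push_neg at h; exact hVne (Set.eq_univ_iff_forall.mpr h)
  have hmem : ∀ z : Circle, z ∈ U ∪ V := fun z => hUV ▸ Set.mem_univ z
  have haV : a ∈ V := (hmem a).resolve_left ha
  have hbU : b ∈ U := (hmem b).resolve_right hb
  set c : Circle := Circle.exp Real.pi * a⁻¹ with hc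
  set f : Circle → ℝ := fun z => Complex.arg ((c * z : Circle) : ℂ) with hf
  set g : ℝ → Circle := fun θ => c⁻¹ * Circle.exp θ with hg
  have hgf : ∀ z, g (f z) = z := by
    intro z; simp only [hf, hg]; rw [Circle.exp_arg]; group
  have hfinj : Function.Injective f := Function.LeftInverse.injective hgf
  have hca : ((c * a : Circle) : ℂ) = -1 := by
    have : c * a = Circle.exp Real.pi := by rw [hc]; group
    rw [this, Circle.coe_exp, Complex.exp_pi_mul_I]
  -- a point on the circle with nonpositive real part and zero imaginary part is -1
  have hneg1 : ∀ w : Circle, (w : ℂ).im = 0 → (w : ℂ).re ≤ 0 → (w : ℂ) = -1 := by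
    intro w him hre
    have habs : ‖(w : ℂ)‖ = 1 := Circle.norm_coe _
    have hsq : Complex.normSq (w : ℂ) = 1 := by
      rw [← Complex.sq_norm, habs]; norm_num
    rw [Complex.normSq_apply, him] at hsq
    have hre' : (w : ℂ).re = -1 := by nlinarith
    apply Complex.ext
    · rw [hre']; norm_num
    · rw [him]; norm_num
  have hkey : ∀ z : Circle, ((c * z : Circle) : ℂ).im = 0 →
      ((c * z : Circle) : ℂ).re ≤ 0 → z = a := by
    intro z him hre
    have h1 : ((c * z : Circle) : ℂ) = -1 := hneg1 _ him hre
    have : c * z = c * a := Subtype.ext (by rw [h1, hca])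
    exact mul_left_cancel this
  have hne : ∀ z : Circle, z ≠ a → ((c * z : Circle) : ℂ) ∈ Complex.slitPlane := by
    intro z hz
    rw [Complex.mem_slitPlane_iff]
    by_contra h
    push_neg at h
    exact hz (hkey z h.2 h.1)
  have hfIoo : ∀ z : Circle, z ≠ a → f z ∈ Set.Ioo (-Real.pi) Real.pi := by
    intro z hz
    refine ⟨Complex.neg_pi_lt_arg _, lt_of_le_of_ne (Complex.arg_le_pi _) ?_⟩
    intro hpi
    rw [hf] at hpi
    simp only at hpi
    rw [Complex.arg_eq_pi_iff] at hpi
    exact hz (hkey z hpi.2 hpi.1.le)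
  have hfg : ∀ θ ∈ Set.Ioo (-Real.pi) Real.pi, f (g θ) = θ := by
    intro θ hθ
    simp only [hf, hg]
    rw [show c * (c⁻¹ * Circle.exp θ) = Circle.exp θ by group]
    exact Circle.arg_exp hθ.1 (le_of_lt hθ.2)
  have hgc : Continuous g := continuous_const.mul Circle.exp.continuous
  have hcoe : Continuous fun z : Circle => ((c * z : Circle) : ℂ) := by
    exact continuous_subtype_val.comp (continuous_const.mul continuous_id)
  have hfc : ContinuousOn f ({a}ᶜ : Set Circle) := by
    intro z hz
    apply ContinuousAt.continuousWithinAt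
    exact ContinuousAt.comp (x := z) (Complex.continuousAt_arg (hne z hz)) hcoe.continuousAt
  have himg : ∀ S : Set Circle, S ⊆ ({a}ᶜ : Set Circle) →
      f '' S = Set.Ioo (-Real.pi) Real.pi ∩ g ⁻¹' S := by
    intro S hS
    ext θ
    constructor
    · rintro ⟨z, hzS, rfl⟩
      exact ⟨hfIoo z (hS hzS), by rw [Set.mem_preimage, hgf]; exact hzS⟩
    · rintro ⟨hθ, hgθ⟩
      exact ⟨g θ, hgθ, hfg θ hθ⟩
  have hUa : U ⊆ ({a}ᶜ : Set Circle) := fun z hz h => ha (h ▸ hz)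
  set K : Set Circle := Vᶜ with hK
  have hKU : K ⊆ U := fun z hz => (hmem z).resolve_right hz
  have hKcpt : IsCompact (f '' K) :=
    ((isClosed_compl_iff.mpr hVo).isCompact).image_of_continuousOn
      (hfc.mono (hKU.trans hUa))
  have hKne : (f '' K).Nonempty := ⟨f b, b, hb, rfl⟩
  obtain ⟨m, hmK, hmlb⟩ := hKcpt.exists_isLeast hKne
  obtain ⟨M, hMK, hMub⟩ := hKcpt.exists_isGreatest hKne
  have hUopen : IsOpen (f '' U) := by
    rw [himg U hUa]; exact isOpen_Ioo.inter (hUo.preimage hgc)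
  have hKsubU : f '' K ⊆ f '' U := Set.image_mono hKU
  obtain ⟨ε, hε, hballm⟩ := Metric.isOpen_iff.mp hUopen m (hKsubU hmK)
  obtain ⟨δ, hδ, hballM⟩ := Metric.isOpen_iff.mp hUopen M (hKsubU hMK)
  set u : ℝ := m - ε / 2 with hu
  set v : ℝ := M + δ / 2 with hv
  have huU : u ∈ f '' U := by
    apply hballm
    rw [Metric.mem_ball, Real.dist_eq, hu,
      show m - ε / 2 - m = -(ε / 2) by ring, abs_neg, abs_of_nonneg (by linarith)]
    linarith
  have hvU : v ∈ f '' U := by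
    apply hballM
    rw [Metric.mem_ball, Real.dist_eq, hv,
      show M + δ / 2 - M = δ / 2 by ring, abs_of_nonneg (by linarith)]
    linarith
  have huW : u ∈ f '' (U ∩ V) := by
    obtain ⟨x, hxU, hxf⟩ := huU
    refine ⟨x, ⟨hxU, ?_⟩, hxf⟩
    by_contra hxV
    have h1 : u ∈ f '' K := ⟨x, hxV, hxf⟩
    have := hmlb h1
    rw [hu] at this; linarith
  have hvW : v ∈ f '' (U ∩ V) := by
    obtain ⟨x, hxU, hxf⟩ := hvU
    refine ⟨x, ⟨hxU, ?_⟩, hxf⟩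
    by_contra hxV
    have h1 : v ∈ f '' K := ⟨x, hxV, hxf⟩
    have := hMub h1
    rw [hv] at this; linarith
  have hWa : U ∩ V ⊆ ({a}ᶜ : Set Circle) := fun z hz => hUa hz.1
  have hJpc : IsPathConnected (f '' (U ∩ V)) := hWpc.image' (hfc.mono hWa)
  have hJord : (f '' (U ∩ V)).OrdConnected :=
    hJpc.isConnected.isPreconnected.ordConnected
  have hfbK : f b ∈ f '' K := ⟨b, hb, rfl⟩
  have hfbJ : f b ∈ f '' (U ∩ V) := by
    apply hJord.out huW hvW
    exact ⟨by have := hmlb hfbK; rw [hu]; linarith,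
           by have := hMub hfbK; rw [hv]; linarith⟩
  obtain ⟨x, hxW, hxf⟩ := hfbJ
  have hxb : x = b := hfinj hxf
  exact hb (hxb ▸ hxW.2)
end

section
/- Let M be a subgroup of a group P. Then the following are equivalent: (i) for all g, h, k, a, c, b, d ∈ P, if k⁻¹h⁻¹ga ∈ M and b⁻¹a⁻¹cd ∈ M then (kb)⁻¹h⁻¹(gc)d ∈ M; (ii) M is a normal subgroup of P. (That is, squares in P commuting up to an element of M are closed under horizontal composition precisely when M is normal in P.) -/
/-- Squares in a group `P` commuting up to an element of a subgroup `M`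
(a square with top `g`, left `h`, right `a`, bottom `k` commutes up to `M` if
`k⁻¹ * h⁻¹ * g * a ∈ M`) are closed under horizontal composition if and only if
`M` is a normal subgroup of `P`. -/
theorem squares_closed_under_horizontal_composition_iff_normal
    {P : Type*} [Group P] (M : Subgroup P) :
    (∀ g h k a c b d : P,
        k⁻¹ * h⁻¹ * g * a ∈ M → b⁻¹ * a⁻¹ * c * d ∈ M →
          (k * b)⁻¹ * h⁻¹ * (g * c) * d ∈ M) ↔ M.Normal := by
  constructor
  · intro H
    refine ⟨fun n hn g => ?_⟩
    have := H n 1 1 1 1 g⁻¹ g⁻¹ (by simpa using hn) (by simpa using M.one_mem)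
    simpa using this
  · intro hN g h k a c b d h1 h2
    have h3 : b⁻¹ * (k⁻¹ * h⁻¹ * g * a) * b ∈ M := hN.conj_mem' _ h1 b
    have h4 := M.mul_mem h3 h2
    have e : (k * b)⁻¹ * h⁻¹ * (g * c) * d =
        (b⁻¹ * (k⁻¹ * h⁻¹ * g * a) * b) * (b⁻¹ * a⁻¹ * c * d) := by group
    rw [e]; exact h4
end

section
/- Let μ : M → P be a crossed module. Consider a 2×2 grid of squares over the crossed module, where square (i,j) (row i, column j, with i,j ∈ {1,2}) has top edge t_ij, left edge l_ij, right edge r_ij, bottom edge b_ij in P and element m_ij ∈ M with μ(m_ij) = b_ij⁻¹ l_ij⁻¹ t_ij r_ij, and the edges match: r_11 = l_12, r_21 = l_22, b_11 = t_21, b_12 = t_22. Then composing rows first and then columns gives the same element of M as composing columns first and then rows; explicitly, (m_21^{b_22} · m_22) · (m_11^{b_12} · m_12)^{r_22} = (m_21 · m_11^{r_21})^{b_22} · (m_22 · m_12^{r_22}). (This is the interchange law for the horizontal and vertical compositions of squares over a crossed module.) -/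
/-- A crossed module consists of groups `M` and `P`, a homomorphism `μ : M →* P`, and
a right action `act : M → P → M` of `P` on `M` by group automorphisms (written `m^p`),
satisfying CM1: `μ (m^p) = p⁻¹ * μ m * p` and CM2: `n⁻¹ * m * n = m^(μ n)`. -/
structure IsCrossedModule {M P : Type*} [Group M] [Group P]
    (μ : M →* P) (act : M → P → M) : Prop where
  act_one : ∀ m : M, act m 1 = m
  act_mul : ∀ (m : M) (p q : P), act m (p * q) = act (act m p) q
  act_map_mul : ∀ (m n : M) (p : P), act (m * n) p = act m p * act n p
  cm1 : ∀ (m : M) (p : P), μ (act m p) = p⁻¹ * μ m * p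
  cm2 : ∀ m n : M, n⁻¹ * m * n = act m (μ n)

/-- The interchange law for horizontal and vertical composition of squares over a
crossed module: for a 2×2 grid of squares over the crossed module, where square
`(i,j)` has top edge `t i j`, left edge `l i j`, right edge `r i j`, bottom edge
`b i j` and element `m i j` with `μ (m i j) = (b i j)⁻¹ * (l i j)⁻¹ * t i j * r i j`,
and with matching edges, composing rows first and then columns gives the same
element of `M` as composing columns first and then rows. -/
theorem interchange_of_squares {M P : Type*} [Group M] [Group P]
    (μ : M →* P) (act : M → P → M) (hcm : IsCrossedModule μ act)
    (t l r b : Fin 2 → Fin 2 → P) (m : Fin 2 → Fin 2 → M)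
    (hbd : ∀ i j, μ (m i j) = (b i j)⁻¹ * (l i j)⁻¹ * t i j * r i j)
    (h11 : r 0 0 = l 0 1) (h21 : r 1 0 = l 1 1)
    (h1v : b 0 0 = t 1 0) (h2v : b 0 1 = t 1 1) :
    act (m 1 0) (b 1 1) * m 1 1 * act (act (m 0 0) (b 0 1) * m 0 1) (r 1 1) =
      act (m 1 0 * act (m 0 0) (r 1 0)) (b 1 1) * (m 1 1 * act (m 0 1) (r 1 1)) := by
  obtain ⟨a1, a2, a3, c1, c2⟩ := hcm
  have key : act (m 0 0) (b 0 1 * r 1 1) = act (m 0 0) (r 1 0 * b 1 1 * μ (m 1 1)) := by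
    rw [hbd 1 1, ← h2v, ← h21]; group
  have h2 : act (m 0 0) (r 1 0 * b 1 1 * μ (m 1 1))
      = (m 1 1)⁻¹ * act (m 0 0) (r 1 0 * b 1 1) * m 1 1 := by
    rw [a2, c2]
  rw [a3, a3, ← a2, ← a2, key, h2]
  group
end
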